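/- Let H be a real inner product space, λ > 0, and let L_1, …, L_{mα} : H → ℝ be convex differentiable loss terms. Let f minimize g ↦ (1/(mn)) Σ_{j=1}^{mα} L_j(g) + (λ/2)‖g‖² and let f^{∖i′} minimize the same objective with the i′-th term L_{i′} omitted. Suppose L_{i′} decomposes as L_{i′}(g) = Σ_{k=1}^{n′} c_k(E_k(g)) with n′ = n/α, where each c_k : ℝ → ℝ is τ-Lipschitz and each evaluation functional E_k : H → ℝ satisfies |E_k(g) − E_k(g′)| ≤ ρ‖g − g′‖ · ‖x′_{i′}‖ for all g, g′ ∈ H. Then ‖f − f^{∖i′}‖ ≤ ρτ‖x′_{i′}‖/(mλα). -/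

import Mathlib

open Set Finset

lemma norm_combo_sq {H : Type*} [NormedAddCommGroup H] [InnerProductSpace ℝ H]
    (t : ℝ) (x y : H) :
    ‖(1-t)•x + t•y‖^2 = (1-t)*‖x‖^2 + t*‖y‖^2 - t*(1-t)*‖x-y‖^2 := by
  have h1 : ∀ z : H, ‖z‖^2 = (inner ℝ z z : ℝ) := fun z => (real_inner_self_eq_norm_sq z).symm
  simp only [h1, inner_add_left, inner_add_right, inner_sub_left, inner_sub_right,
    real_inner_smul_left, real_inner_smul_right, real_inner_comm y x]
  ring

lemma strong_min {H : Type*} [NormedAddCommGroup H] [InnerProductSpace ℝ H]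
    (G : H → ℝ) (lam : ℝ) (hlam : 0 < lam) (f g : H)
    (hGc : ∀ t : ℝ, t ∈ Ioo (0:ℝ) 1 → G ((1-t)•f + t•g) ≤ (1-t)*G f + t*G g)
    (hmin : ∀ h : H, G f + lam/2*‖f‖^2 ≤ G h + lam/2*‖h‖^2) :
    G f + lam/2*‖f‖^2 + lam/2*‖f-g‖^2 ≤ G g + lam/2*‖g‖^2 := by
  have key : ∀ t : ℝ, t ∈ Ioo (0:ℝ) 1 →
      G f + lam/2*‖f‖^2 + lam/2*(1-t)*‖f-g‖^2 ≤ G g + lam/2*‖g‖^2 := by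
    intro t ht
    have h1 := hmin ((1-t)•f + t•g)
    have h2 := hGc t ht
    have h3 := norm_combo_sq t f g
    rw [h3] at h1
    nlinarith [ht.1, ht.2]
  have hlim : Filter.Tendsto (fun t : ℝ => G f + lam/2*‖f‖^2 + lam/2*(1-t)*‖f-g‖^2)
      (nhdsWithin 0 (Ioo (0:ℝ) 1)) (nhds (G f + lam/2*‖f‖^2 + lam/2*(1-0)*‖f-g‖^2)) := by
    apply Filter.Tendsto.mono_left _ nhdsWithin_le_nhds
    exact (Continuous.tendsto (by continuity) 0)
  have hne : (nhdsWithin (0:ℝ) (Ioo (0:ℝ) 1)).NeBot := by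
    apply mem_closure_iff_nhdsWithin_neBot.mp
    have : (0:ℝ) ∈ closure (Ioo (0:ℝ) 1) := by
      rw [closure_Ioo (by norm_num : (0:ℝ) ≠ 1)]; simp
    exact this
  have := le_of_tendsto hlim (Filter.eventually_of_mem self_mem_nhdsWithin key)
  simpa using this

/-- **Parameter stability under removal of one mini-sample (Theorem: stability vs.
structural complexity regularization, key bound).**
`f` minimizes `g ↦ (1/(mn)) Σ_{j=1}^{mα} L_j g + (λ/2)‖g‖²` and `f'` minimizes the
same objective with the `i'`-th loss term omitted.  If the removed loss decomposes
as `L_{i'} g = Σ_{k=1}^{n/α} c_k (E_k g)` with each `c_k` τ-Lipschitz and each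
`E_k` ρ-admissible at the mini-sample input of norm `xnorm`, then
`‖f − f'‖ ≤ ρτ·xnorm/(mλα)`. -/
theorem parameter_stability_remove_one_minisample
    {H : Type*} [NormedAddCommGroup H] [InnerProductSpace ℝ H]
    (m n α : ℕ) (hm : 0 < m) (hn : 0 < n) (hα : 0 < α) (hdvd : α ∣ n)
    (L : Fin (m * α) → H → ℝ)
    (hconv : ∀ j, ConvexOn ℝ univ (L j))
    (hdiff : ∀ j, Differentiable ℝ (L j))
    (lam : ℝ) (hlam : 0 < lam)
    (i' : Fin (m * α)) (f f' : H)
    (hf : ∀ g : H,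
      (1 / ((m : ℝ) * n)) * ∑ j, L j f + lam / 2 * ‖f‖ ^ 2
        ≤ (1 / ((m : ℝ) * n)) * ∑ j, L j g + lam / 2 * ‖g‖ ^ 2)
    (hf' : ∀ g : H,
      (1 / ((m : ℝ) * n)) * ∑ j ∈ univ.erase i', L j f' + lam / 2 * ‖f'‖ ^ 2
        ≤ (1 / ((m : ℝ) * n)) * ∑ j ∈ univ.erase i', L j g + lam / 2 * ‖g‖ ^ 2)
    (τ ρ xnorm : ℝ) (hτ : 0 ≤ τ) (hρ : 0 ≤ ρ) (hx : 0 ≤ xnorm)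
    (c : Fin (n / α) → ℝ → ℝ) (E : Fin (n / α) → H → ℝ)
    (hdecomp : ∀ g : H, L i' g = ∑ k, c k (E k g))
    (hlip : ∀ (k : Fin (n / α)) (a b : ℝ), |c k a - c k b| ≤ τ * |a - b|)
    (hadm : ∀ (k : Fin (n / α)) (g g' : H),
      |E k g - E k g'| ≤ ρ * ‖g - g'‖ * xnorm) :
    ‖f - f'‖ ≤ ρ * τ * xnorm / ((m : ℝ) * lam * α) := by
  have hmn : (0:ℝ) < (m:ℝ) * n := by positivity
  -- convexity of scaled sums
  have hsum : ∀ (s : Finset (Fin (m*α))) (a b : H), ∀ t ∈ Ioo (0:ℝ) 1,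
      (1/((m:ℝ)*n)) * ∑ j ∈ s, L j ((1-t)•a + t•b)
        ≤ (1-t) * ((1/((m:ℝ)*n)) * ∑ j ∈ s, L j a)
          + t * ((1/((m:ℝ)*n)) * ∑ j ∈ s, L j b) := by
    intro s a b t ht
    have h1 : ∑ j ∈ s, L j ((1-t)•a + t•b)
        ≤ ∑ j ∈ s, ((1-t) * L j a + t * L j b) := by
      apply Finset.sum_le_sum
      intro j _
      have := (hconv j).2 (mem_univ a) (mem_univ b)
        (by linarith [ht.1, ht.2] : (0:ℝ) ≤ 1 - t) (le_of_lt ht.1) (by ring)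
      simpa [smul_eq_mul] using this
    have h2 : (1/((m:ℝ)*n)) * ∑ j ∈ s, L j ((1-t)•a + t•b)
        ≤ (1/((m:ℝ)*n)) * ∑ j ∈ s, ((1-t) * L j a + t * L j b) := by
      apply mul_le_mul_of_nonneg_left h1 (by positivity)
    calc (1/((m:ℝ)*n)) * ∑ j ∈ s, L j ((1-t)•a + t•b)
        ≤ (1/((m:ℝ)*n)) * ∑ j ∈ s, ((1-t) * L j a + t * L j b) := h2
      _ = (1-t) * ((1/((m:ℝ)*n)) * ∑ j ∈ s, L j a)
          + t * ((1/((m:ℝ)*n)) * ∑ j ∈ s, L j b) := by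
          rw [Finset.sum_add_distrib, ← Finset.mul_sum, ← Finset.mul_sum]; ring
  have h1 := strong_min (fun g => (1/((m:ℝ)*n)) * ∑ j, L j g) lam hlam f f'
    (fun t ht => hsum univ f f' t ht) hf
  have h2 := strong_min (fun g => (1/((m:ℝ)*n)) * ∑ j ∈ univ.erase i', L j g) lam hlam f' f
    (fun t ht => hsum (univ.erase i') f' f t ht) hf'
  rw [norm_sub_rev f' f] at h2
  have split : ∀ g : H, ∑ j, L j g = L i' g + ∑ j ∈ univ.erase i', L j g := by
    intro g
    exact (Finset.add_sum_erase univ (fun j => L j g) (mem_univ i')).symm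
  rw [split f, split f'] at h1
  have hkey : lam * ‖f - f'‖^2 ≤ (1/((m:ℝ)*n)) * (L i' f' - L i' f) := by
    have e1 : (1/((m:ℝ)*n)) * (L i' f + ∑ j ∈ univ.erase i', L j f)
        = (1/((m:ℝ)*n)) * L i' f + (1/((m:ℝ)*n)) * ∑ j ∈ univ.erase i', L j f := by ring
    have e2 : (1/((m:ℝ)*n)) * (L i' f' + ∑ j ∈ univ.erase i', L j f')
        = (1/((m:ℝ)*n)) * L i' f' + (1/((m:ℝ)*n)) * ∑ j ∈ univ.erase i', L j f' := by ring
    rw [e1, e2] at h1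
    nlinarith [h1, h2]
  -- Lipschitz bound on the removed loss
  have hL : L i' f' - L i' f ≤ ((n/α : ℕ):ℝ) * (τ * (ρ * ‖f - f'‖ * xnorm)) := by
    rw [hdecomp f', hdecomp f, ← Finset.sum_sub_distrib]
    have hb : ∀ k : Fin (n/α), c k (E k f') - c k (E k f) ≤ τ * (ρ * ‖f - f'‖ * xnorm) := by
      intro k
      have ha := hlip k (E k f') (E k f)
      have hb2 := hadm k f' f
      rw [norm_sub_rev f' f] at hb2
      have := le_trans (le_abs_self _) (le_trans ha (mul_le_mul_of_nonneg_left hb2 hτ))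
      exact this
    have hsum2 := Finset.sum_le_sum (fun k (_ : k ∈ Finset.univ) => hb k)
    have hconst : ∑ _k : Fin (n/α), (τ * (ρ * ‖f - f'‖ * xnorm))
        = ((n/α : ℕ):ℝ) * (τ * (ρ * ‖f - f'‖ * xnorm)) := by
      rw [Finset.sum_const, Finset.card_univ, Fintype.card_fin, nsmul_eq_mul]
    rw [hconst] at hsum2
    exact hsum2
  have hNα : ((n/α : ℕ):ℝ) * α = n := by exact_mod_cast Nat.div_mul_cancel hdvd
  have hN : (0:ℝ) < ((n/α : ℕ):ℝ) := by
    have : 0 < n / α := Nat.div_pos (Nat.le_of_dvd hn hdvd) hα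
    exact_mod_cast this
  set d := ‖f - f'‖ with hdd
  have hd0 : 0 ≤ d := norm_nonneg _
  have hkey2 : lam * d^2 ≤ (1/((m:ℝ)*n)) * (((n/α : ℕ):ℝ) * (τ * (ρ * d * xnorm))) :=
    le_trans hkey (mul_le_mul_of_nonneg_left hL (by positivity))
  rcases eq_or_lt_of_le hd0 with h0 | h0
  · rw [← h0]; positivity
  · rw [le_div_iff₀ (by positivity)]
    rw [one_div, inv_mul_eq_div, le_div_iff₀ hmn] at hkey2
    have hmpos : (0:ℝ) < (m:ℝ) := by exact_mod_cast hm
    have hαpos : (0:ℝ) < (α:ℝ) := by exact_mod_cast hα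
    rw [← hNα] at hkey2
    nlinarith [mul_pos hN h0, hkey2]
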